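/- Let γ, θ ∈ (0,1], μ, σ ∈ (0,2], p, q ∈ (1,∞) with γq + θpq − pq + 1 > 0. Assume θ/σ ≥ γ/μ and q(p − γ) ≥ 1. Then min_{1≤i≤4} H_i(θ/σ) = E₄ and for every d₀ > 0, min_{1≤i≤4} H_i(d₀) ≤ E₄; that is, the supremum over d₀ > 0 of min_i H_i(d₀) is attained at d₀ = θ/σ and equals E₄ = σ(γq+θpq−pq+1)/(θ(pq−1)). -/

import Mathlib

/-- `H₁(d₀) = (q(γ+θp)−pq+1)/(d₀(pq−1))`. -/
noncomputable def H1 (γ θ p q d₀ : ℝ) : ℝ := (q * (γ + θ * p) - p * q + 1) / (d₀ * (p * q - 1))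

/-- `H₂(d₀) = (q(γ+d₀σp)−pq+1)/(d₀(pq−1))`. -/
noncomputable def H2 (γ σ p q d₀ : ℝ) : ℝ := (q * (γ + d₀ * σ * p) - p * q + 1) / (d₀ * (p * q - 1))

/-- `H₃(d₀) = (q(μd₀+θp)−pq+1)/(d₀(pq−1))`. -/
noncomputable def H3 (θ μ p q d₀ : ℝ) : ℝ := (q * (μ * d₀ + θ * p) - p * q + 1) / (d₀ * (p * q - 1))

/-- `H₄(d₀) = q(μ+σp)/(pq−1) − 1/d₀`. -/
noncomputable def H4 (μ σ p q d₀ : ℝ) : ℝ := q * (μ + σ * p) / (p * q - 1) - 1 / d₀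

/-- Case II of the proof of Lemma 7 (subcase `q ≥ 1/(p−γ)`): if `θ/σ ≥ γ/μ` and
`q(p−γ) ≥ 1`, then the supremum over `d₀ > 0` of `min_i H_i(d₀)` is attained at
`d₀ = θ/σ` and equals `E₄ = σ(γq+θpq−pq+1)/(θ(pq−1))`. -/
theorem stmt16 (γ θ μ σ p q : ℝ)
    (hγ : γ ∈ Set.Ioc (0 : ℝ) 1) (hθ : θ ∈ Set.Ioc (0 : ℝ) 1)
    (hμ : μ ∈ Set.Ioc (0 : ℝ) 2) (hσ : σ ∈ Set.Ioc (0 : ℝ) 2)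
    (hp : 1 < p) (hq : 1 < q)
    (hpos : γ * q + θ * p * q - p * q + 1 > 0)
    (hcase : γ / μ ≤ θ / σ) (hsub : 1 ≤ q * (p - γ)) :
    min (min (H1 γ θ p q (θ / σ)) (H2 γ σ p q (θ / σ)))
        (min (H3 θ μ p q (θ / σ)) (H4 μ σ p q (θ / σ))) =
      σ * (γ * q + θ * p * q - p * q + 1) / (θ * (p * q - 1)) ∧
    ∀ d₀ > (0 : ℝ),
      min (min (H1 γ θ p q d₀) (H2 γ σ p q d₀)) (min (H3 θ μ p q d₀) (H4 μ σ p q d₀)) ≤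
        σ * (γ * q + θ * p * q - p * q + 1) / (θ * (p * q - 1)) := by
  obtain ⟨hγ0, hγ1⟩ := hγ
  obtain ⟨hθ0, hθ1⟩ := hθ
  obtain ⟨hμ0, hμ1⟩ := hμ
  obtain ⟨hσ0, hσ1⟩ := hσ
  have hA : 0 < p * q - 1 := by nlinarith
  have hθσ : 0 < θ / σ := div_pos hθ0 hσ0
  have hcross : γ * σ ≤ θ * μ := by
    rw [div_le_div_iff₀ hμ0 hσ0] at hcase; nlinarith
  set E : ℝ := σ * (γ * q + θ * p * q - p * q + 1) / (θ * (p * q - 1)) with hE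
  have hθA : 0 < θ * (p * q - 1) := by positivity
  have hgap : 0 ≤ q * (θ * μ - σ * γ) / (θ * (p * q - 1)) := by
    apply div_nonneg _ (le_of_lt hθA)
    nlinarith
  have h1 : H1 γ θ p q (θ / σ) = E := by
    rw [H1, hE, div_eq_div_iff (by positivity : θ / σ * (p * q - 1) ≠ 0) (ne_of_gt hθA)]
    field_simp
  have h2 : H2 γ σ p q (θ / σ) = E := by
    rw [H2, hE, div_eq_div_iff (by positivity : θ / σ * (p * q - 1) ≠ 0) (ne_of_gt hθA)]
    field_simp
  have h3 : E ≤ H3 θ μ p q (θ / σ) := by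
    have : H3 θ μ p q (θ / σ) = E + q * (θ * μ - σ * γ) / (θ * (p * q - 1)) := by
      rw [H3, hE]
      field_simp
      ring
    rw [this]; linarith
  have h4 : E ≤ H4 μ σ p q (θ / σ) := by
    have : H4 μ σ p q (θ / σ) = E + q * (θ * μ - σ * γ) / (θ * (p * q - 1)) := by
      rw [H4, hE, ← add_div, eq_div_iff (ne_of_gt hθA), sub_mul, one_div_div, div_mul_eq_mul_div, div_mul_eq_mul_div,
        mul_comm θ, ← mul_assoc, mul_right_comm _ (p * q - 1) θ, mul_div_cancel_right₀ _ (ne_of_gt hA),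
        mul_comm (p * q - 1) θ, mul_div_assoc σ, mul_div_cancel_left₀ _ (ne_of_gt hθ0)]
      ring
    rw [this]; linarith
  constructor
  · rw [h1, h2, min_self, min_eq_left (le_min h3 h4)]
  · intro d₀ hd₀
    have hdA : 0 < d₀ * (p * q - 1) := by positivity
    rcases le_total d₀ (θ / σ) with hle | hle
    · -- H2 d₀ ≤ E
      have hH2 : H2 γ σ p q d₀ ≤ E := by
        rw [H2, hE, div_le_div_iff₀ hdA hθA]
        have hdσ : d₀ * σ ≤ θ := by
          rw [le_div_iff₀ hσ0] at hle; linarith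
        nlinarith [mul_nonneg (sub_nonneg.2 hdσ) (sub_nonneg.2 (by nlinarith : q * γ ≤ p * q - 1))]
      calc min (min (H1 γ θ p q d₀) (H2 γ σ p q d₀)) (min (H3 θ μ p q d₀) (H4 μ σ p q d₀))
          ≤ H2 γ σ p q d₀ := le_trans (min_le_left _ _) (min_le_right _ _)
        _ ≤ E := hH2
    · -- H1 d₀ ≤ E
      have hH1 : H1 γ θ p q d₀ ≤ E := by
        rw [H1, hE, div_le_div_iff₀ hdA hθA]
        have hdσ : θ ≤ d₀ * σ := by
          rw [div_le_iff₀ hσ0] at hle; linarith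
        nlinarith [mul_nonneg (sub_nonneg.2 hdσ) (le_of_lt hpos)]
      calc min (min (H1 γ θ p q d₀) (H2 γ σ p q d₀)) (min (H3 θ μ p q d₀) (H4 μ σ p q d₀))
          ≤ H1 γ θ p q d₀ := le_trans (min_le_left _ _) (min_le_left _ _)
        _ ≤ E := hH1
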